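/- Let G be a connected finite simple graph with independence number at most 3 containing three pairwise adjacent cut vertices x, y, z. Then G − {x,y,z} has at most 3 connected components, all of which are cliques, and each of x, y, z has a component of G − {x,y,z} none of whose vertices is adjacent to either of the other two cut vertices. -/

import Mathlib

open SimpleGraph

variable {V : Type*}

/-- `G` has independence number at most `k`: every independent set has at most `k` vertices. -/
def IndepBound (G : SimpleGraph V) (k : ℕ) : Prop :=
  ∀ s : Finset V, (∀ a ∈ s, ∀ b ∈ s, a ≠ b → ¬ G.Adj a b) → s.card ≤ k

/-- The induced subgraph on `A` has independence number at most `k`. -/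
def IndepBoundOn (G : SimpleGraph V) (A : Set V) (k : ℕ) : Prop :=
  ∀ s : Finset V, ↑s ⊆ A → (∀ a ∈ s, ∀ b ∈ s, a ≠ b → ¬ G.Adj a b) → s.card ≤ k

/-- `x` is a cut vertex (articulation point): `G - x` is disconnected. -/
def IsCutVertex (G : SimpleGraph V) (x : V) : Prop :=
  ¬ (G.induce ({x}ᶜ : Set V)).Preconnected

/-- `S` is a vertex cut: `G - S` is disconnected. -/
def IsCutSet (G : SimpleGraph V) (S : Set V) : Prop :=
  ¬ (G.induce Sᶜ).Preconnected

/-- `G` has a Hamiltonian path with endpoints `u` and `v`. -/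
def HasHamPathBetween [DecidableEq V] (G : SimpleGraph V) (u v : V) : Prop :=
  ∃ p : G.Walk u v, p.IsHamiltonian

/-- `G` has a Hamiltonian path starting at `u`. -/
def HasHamPathFrom [DecidableEq V] (G : SimpleGraph V) (u : V) : Prop :=
  ∃ v, ∃ p : G.Walk u v, p.IsHamiltonian

/-- `G` has a Hamiltonian path. -/
def HasHamPath [DecidableEq V] (G : SimpleGraph V) : Prop :=
  ∃ u v, ∃ p : G.Walk u v, p.IsHamiltonian

/-- `G` has a path cover of size two: two vertex-disjoint paths, one starting at `u`
and the other starting at `v`, whose vertex sets partition `V(G)`. -/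
def HasPathCover2 (G : SimpleGraph V) (u v : V) : Prop :=
  ∃ (a b : V) (p : G.Walk u a) (q : G.Walk v b), p.IsPath ∧ q.IsPath ∧
    ∀ w, (w ∈ p.support ∧ w ∉ q.support) ∨ (w ∈ q.support ∧ w ∉ p.support)

/-- `G` is `s`-connected: more than `s` vertices, and removing any fewer than `s`
vertices leaves the graph connected. -/
def SConnected (G : SimpleGraph V) (s : ℕ) : Prop :=
  s < Nat.card V ∧ ∀ S : Set V, S.ncard < s → (G.induce Sᶜ).Connected

lemma lift_reach (G : SimpleGraph V) {A B : Set V} (hAB : A ⊆ B) {u v : A}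
    (h : (G.induce A).Reachable u v) :
    (G.induce B).Reachable ⟨u, hAB u.2⟩ ⟨v, hAB v.2⟩ := by
  exact h.map (G.induceHomOfLE hAB).toHom

lemma exit_lemma (G : SimpleGraph V) (x : V) {u v : V} (p : G.Walk u v)
    (hv : v ∈ ({x}ᶜ : Set V)) :
    (∃ hu : u ∈ ({x}ᶜ : Set V), (G.induce ({x}ᶜ : Set V)).Reachable ⟨u, hu⟩ ⟨v, hv⟩) ∨
    (∃ w, ∃ hw : w ∈ ({x}ᶜ : Set V), G.Adj x w ∧
      (G.induce ({x}ᶜ : Set V)).Reachable ⟨w, hw⟩ ⟨v, hv⟩) := by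
  induction p with
  | nil => exact Or.inl ⟨hv, Reachable.refl _⟩
  | @cons a b c hab q ih =>
    rcases ih hv with ⟨hb, hr⟩ | ⟨w, hw, hadj, hr⟩
    · by_cases ha : a ∈ ({x}ᶜ : Set V)
      · refine Or.inl ⟨ha, Reachable.trans ?_ hr⟩
        exact Adj.reachable (by simp [hab])
      · have hax : a = x := by simpa using ha
        exact Or.inr ⟨b, hb, hax ▸ hab, hr⟩
    · exact Or.inr ⟨w, hw, hadj, hr⟩

lemma private_comp (G : SimpleGraph V) (hconn : G.Connected) (x b1 : V)
    (h1 : b1 ∈ ({x}ᶜ : Set V)) (hx : IsCutVertex G x) :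
    ∃ w, ∃ hw : w ∈ ({x}ᶜ : Set V), G.Adj x w ∧
      ¬ (G.induce ({x}ᶜ : Set V)).Reachable ⟨b1, h1⟩ ⟨w, hw⟩ := by
  unfold IsCutVertex Preconnected at hx
  push_neg at hx
  obtain ⟨a, b, hab⟩ := hx
  have hone : ¬ (G.induce ({x}ᶜ : Set V)).Reachable ⟨b1, h1⟩ a ∨
      ¬ (G.induce ({x}ᶜ : Set V)).Reachable ⟨b1, h1⟩ b := by
    by_contra h
    push_neg at h
    exact hab (h.1.symm.trans h.2)
  have main : ∀ t : ({x}ᶜ : Set V), ¬ (G.induce ({x}ᶜ : Set V)).Reachable ⟨b1, h1⟩ t →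
      ∃ w, ∃ hw : w ∈ ({x}ᶜ : Set V), G.Adj x w ∧
      ¬ (G.induce ({x}ᶜ : Set V)).Reachable ⟨b1, h1⟩ ⟨w, hw⟩ := by
    rintro ⟨t, ht⟩ hnr
    rcases exit_lemma G x (hconn.preconnected b1 t).some ht with ⟨hu, hr⟩ | ⟨w, hw, hadj, hr⟩
    · exact absurd hr hnr
    · exact ⟨w, hw, hadj, fun h => hnr (h.trans hr)⟩
  rcases hone with h | h
  · exact main a h
  · exact main b h

lemma side_facts (G : SimpleGraph V) {x b1 b2 : V}
    (h1 : b1 ∈ ({x}ᶜ : Set V)) (h2 : b2 ∈ ({x}ᶜ : Set V)) (hb : G.Adj b1 b2)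
    {w : V} (hw : w ∈ ({x}ᶜ : Set V))
    (hnr : ¬ (G.induce ({x}ᶜ : Set V)).Reachable ⟨b1, h1⟩ ⟨w, hw⟩)
    {v : V} (hv : v ∈ ({x}ᶜ : Set V))
    (hr : (G.induce ({x}ᶜ : Set V)).Reachable ⟨v, hv⟩ ⟨w, hw⟩) :
    ¬ G.Adj b1 v ∧ ¬ G.Adj b2 v := by
  constructor
  · intro h
    exact hnr ((Adj.reachable (show (G.induce ({x}ᶜ : Set V)).Adj ⟨b1, h1⟩ ⟨v, hv⟩ by
      simp [h])).trans hr)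
  · intro h
    have r1 : (G.induce ({x}ᶜ : Set V)).Reachable ⟨b1, h1⟩ ⟨b2, h2⟩ :=
      Adj.reachable (by simp [hb])
    have r2 : (G.induce ({x}ᶜ : Set V)).Reachable ⟨b2, h2⟩ ⟨v, hv⟩ :=
      Adj.reachable (by simp [h])
    exact hnr ((r1.trans r2).trans hr)

/-- If G is connected with independence number at most 3 and x, y, z are three pairwise
adjacent cut vertices, then G - {x,y,z} has at most 3 components, all cliques, and each
of x, y, z has a private component whose vertices are not adjacent to the other two
cut vertices. -/
theorem stmt_12 [Fintype V] [DecidableEq V] (G : SimpleGraph V)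
    (hconn : G.Connected) (hα : IndepBound G 3) (x y z : V)
    (hxy : x ≠ y) (hxz : x ≠ z) (hyz : y ≠ z)
    (hx : IsCutVertex G x) (hy : IsCutVertex G y) (hz : IsCutVertex G z)
    (haxy : G.Adj x y) (haxz : G.Adj x z) (hayz : G.Adj y z) :
    Nat.card (G.induce (({x, y, z} : Set V)ᶜ)).ConnectedComponent ≤ 3 ∧
    (∀ c : (G.induce (({x, y, z} : Set V)ᶜ)).ConnectedComponent,
      G.IsClique (Subtype.val '' c.supp)) ∧
    (∃ c : (G.induce (({x, y, z} : Set V)ᶜ)).ConnectedComponent,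
      (∃ w ∈ c.supp, G.Adj x w) ∧ ∀ w ∈ c.supp, ¬ G.Adj y ↑w ∧ ¬ G.Adj z ↑w) ∧
    (∃ c : (G.induce (({x, y, z} : Set V)ᶜ)).ConnectedComponent,
      (∃ w ∈ c.supp, G.Adj y w) ∧ ∀ w ∈ c.supp, ¬ G.Adj x ↑w ∧ ¬ G.Adj z ↑w) ∧
    (∃ c : (G.induce (({x, y, z} : Set V)ᶜ)).ConnectedComponent,
      (∃ w ∈ c.supp, G.Adj z w) ∧ ∀ w ∈ c.supp, ¬ G.Adj x ↑w ∧ ¬ G.Adj y ↑w) := by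
  set S : Set V := {x, y, z} with hS
  -- memberships
  have hyx : y ∈ ({x}ᶜ : Set V) := by simp [hxy.symm]
  have hzx : z ∈ ({x}ᶜ : Set V) := by simp [hxz.symm]
  have hxy' : x ∈ ({y}ᶜ : Set V) := by simp [hxy]
  have hzy : z ∈ ({y}ᶜ : Set V) := by simp [hyz.symm]
  have hxz' : x ∈ ({z}ᶜ : Set V) := by simp [hxz]
  have hyz' : y ∈ ({z}ᶜ : Set V) := by simp [hyz]
  -- private neighbors
  obtain ⟨wx, hwx, haxwx, hnrx⟩ := private_comp G hconn x y hyx hx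
  obtain ⟨wy, hwy, haywy, hnry⟩ := private_comp G hconn y x hxy' hy
  obtain ⟨wz, hwz, hazwz, hnrz⟩ := private_comp G hconn z x hxz' hz
  -- the private neighbors avoid S
  have hwxS : wx ∈ Sᶜ := by
    have h1 : wx ≠ y := fun h => hnrx (by subst h; exact Reachable.refl _)
    have h2 : wx ≠ z := fun h => hnrx (by subst h; exact Adj.reachable (by simp [hayz]))
    have h0 : wx ≠ x := by simpa using hwx
    simp [hS, h0, h1, h2]
  have hwyS : wy ∈ Sᶜ := by
    have h1 : wy ≠ x := fun h => hnry (by subst h; exact Reachable.refl _)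
    have h2 : wy ≠ z := fun h => hnry (by subst h; exact Adj.reachable (by simp [haxz]))
    have h0 : wy ≠ y := by simpa using hwy
    simp [hS, h0, h1, h2]
  have hwzS : wz ∈ Sᶜ := by
    have h1 : wz ≠ x := fun h => hnrz (by subst h; exact Reachable.refl _)
    have h2 : wz ≠ y := fun h => hnrz (by subst h; exact Adj.reachable (by simp [haxy]))
    have h0 : wz ≠ z := by simpa using hwz
    simp [hS, h0, h1, h2]
  have hsubx : Sᶜ ⊆ ({x}ᶜ : Set V) := by intro v hv; simp [hS] at hv ⊢; tauto
  have hsuby : Sᶜ ⊆ ({y}ᶜ : Set V) := by intro v hv; simp [hS] at hv ⊢; tauto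
  have hsubz : Sᶜ ⊆ ({z}ᶜ : Set V) := by intro v hv; simp [hS] at hv ⊢; tauto
  -- the three components
  let H := G.induce Sᶜ
  let cx : H.ConnectedComponent := H.connectedComponentMk ⟨wx, hwxS⟩
  let cy : H.ConnectedComponent := H.connectedComponentMk ⟨wy, hwyS⟩
  let cz : H.ConnectedComponent := H.connectedComponentMk ⟨wz, hwzS⟩
  -- key properties
  have Px : ∀ w ∈ cx.supp, ¬ G.Adj y ↑w ∧ ¬ G.Adj z ↑w := by
    rintro ⟨w, hwS⟩ hmem
    rw [ConnectedComponent.mem_supp_iff, ConnectedComponent.eq] at hmem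
    exact side_facts G hyx hzx hayz hwx hnrx (hsubx hwS) (lift_reach G hsubx hmem)
  have Py : ∀ w ∈ cy.supp, ¬ G.Adj x ↑w ∧ ¬ G.Adj z ↑w := by
    rintro ⟨w, hwS⟩ hmem
    rw [ConnectedComponent.mem_supp_iff, ConnectedComponent.eq] at hmem
    exact side_facts G hxy' hzy haxz hwy hnry (hsuby hwS) (lift_reach G hsuby hmem)
  have Pz : ∀ w ∈ cz.supp, ¬ G.Adj x ↑w ∧ ¬ G.Adj y ↑w := by
    rintro ⟨w, hwS⟩ hmem
    rw [ConnectedComponent.mem_supp_iff, ConnectedComponent.eq] at hmem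
    exact side_facts G hxz' hyz' haxy hwz hnrz (hsubz hwS) (lift_reach G hsubz hmem)
  have memx : (⟨wx, hwxS⟩ : ↑Sᶜ) ∈ cx.supp := by rw [ConnectedComponent.mem_supp_iff]
  have memy : (⟨wy, hwyS⟩ : ↑Sᶜ) ∈ cy.supp := by rw [ConnectedComponent.mem_supp_iff]
  have memz : (⟨wz, hwzS⟩ : ↑Sᶜ) ∈ cz.supp := by rw [ConnectedComponent.mem_supp_iff]
  -- distinctness of components
  have ncxcy : cx ≠ cy := fun h => (Px _ (h ▸ memy)).1 haywy
  have ncxcz : cx ≠ cz := fun h => (Px _ (h ▸ memz)).2 hazwz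
  have ncycz : cy ≠ cz := fun h => (Py _ (h ▸ memz)).2 hazwz
  -- nonadjacency across distinct components
  have diffAdj : ∀ u v : ↑Sᶜ, H.connectedComponentMk u ≠ H.connectedComponentMk v →
      ¬ G.Adj ↑u ↑v ∧ (↑u : V) ≠ ↑v := by
    intro u v hne
    refine ⟨fun h => hne (ConnectedComponent.eq.mpr (Adj.reachable (show H.Adj u v from h))),
      fun h => hne (by rw [Subtype.ext h])⟩
  -- no 4 independent vertices
  have indep4 : ∀ a b c d : V, a ≠ b → a ≠ c → a ≠ d → b ≠ c → b ≠ d → c ≠ d →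
      ¬ G.Adj a b → ¬ G.Adj a c → ¬ G.Adj a d → ¬ G.Adj b c → ¬ G.Adj b d →
      ¬ G.Adj c d → False := by
    intro a b c d hab hac had hbc hbd hcd nab nac nad nbc nbd ncd
    have hcard : ({a, b, c, d} : Finset V).card = 4 := by
      rw [Finset.card_insert_of_notMem (by simp [hab, hac, had]),
        Finset.card_insert_of_notMem (by simp [hbc, hbd]),
        Finset.card_insert_of_notMem (by simp [hcd]), Finset.card_singleton]
    have hle := hα {a, b, c, d} (by
      intro p hp q hq hpq
      simp only [Finset.mem_insert, Finset.mem_singleton] at hp hq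
      rcases hp with rfl | rfl | rfl | rfl <;> rcases hq with rfl | rfl | rfl | rfl <;>
        first
          | exact absurd rfl hpq
          | exact nab | exact nac | exact nad | exact nbc | exact nbd | exact ncd
          | exact fun h => nab h.symm | exact fun h => nac h.symm
          | exact fun h => nad h.symm | exact fun h => nbc h.symm
          | exact fun h => nbd h.symm | exact fun h => ncd h.symm)
    omega
  -- using 4 vertices in 4 pairwise distinct components
  have indepComp : ∀ u v p q : ↑Sᶜ,
      H.connectedComponentMk u ≠ H.connectedComponentMk p →
      H.connectedComponentMk u ≠ H.connectedComponentMk q →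
      H.connectedComponentMk v ≠ H.connectedComponentMk p →
      H.connectedComponentMk v ≠ H.connectedComponentMk q →
      H.connectedComponentMk p ≠ H.connectedComponentMk q →
      (↑u : V) ≠ ↑v → ¬ G.Adj ↑u ↑v → False := by
    intro u v p q hup huq hvp hvq hpq hne hadj
    obtain ⟨n1, d1⟩ := diffAdj u p hup
    obtain ⟨n2, d2⟩ := diffAdj u q huq
    obtain ⟨n3, d3⟩ := diffAdj v p hvp
    obtain ⟨n4, d4⟩ := diffAdj v q hvq
    obtain ⟨n5, d5⟩ := diffAdj p q hpq
    exact indep4 ↑u ↑v ↑p ↑q hne d1 d2 d3 d4 d5 hadj n1 n2 n3 n4 n5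
  -- every component is one of the three
  have hall : ∀ c : H.ConnectedComponent, c = cx ∨ c = cy ∨ c = cz := by
    intro c
    by_contra hc
    push_neg at hc
    obtain ⟨hc1, hc2, hc3⟩ := hc
    obtain ⟨v, hv⟩ := c.exists_rep
    have hv' : H.connectedComponentMk v = c := hv
    have d1 := diffAdj v ⟨wx, hwxS⟩ (by rw [hv']; exact hc1)
    have d2 := diffAdj v ⟨wy, hwyS⟩ (by rw [hv']; exact hc2)
    have d3 := diffAdj v ⟨wz, hwzS⟩ (by rw [hv']; exact hc3)
    have d4 := diffAdj ⟨wx, hwxS⟩ ⟨wy, hwyS⟩ ncxcy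
    have d5 := diffAdj ⟨wx, hwxS⟩ ⟨wz, hwzS⟩ ncxcz
    have d6 := diffAdj ⟨wy, hwyS⟩ ⟨wz, hwzS⟩ ncycz
    exact indep4 ↑v wx wy wz d1.2 d2.2 d3.2 d4.2 d5.2 d6.2 d1.1 d2.1 d3.1 d4.1 d5.1 d6.1
  refine ⟨?_, ?_, ⟨cx, ⟨⟨wx, hwxS⟩, memx, haxwx⟩, Px⟩, ⟨cy, ⟨⟨wy, hwyS⟩, memy, haywy⟩, Py⟩,
    ⟨cz, ⟨⟨wz, hwzS⟩, memz, hazwz⟩, Pz⟩⟩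
  · -- at most three components
    have hsub : (Set.univ : Set H.ConnectedComponent) ⊆ {cx, cy, cz} := by
      intro c _
      rcases hall c with h | h | h <;> simp [h]
    calc Nat.card H.ConnectedComponent = (Set.univ : Set H.ConnectedComponent).ncard :=
          (Set.ncard_univ _).symm
      _ ≤ ({cx, cy, cz} : Set H.ConnectedComponent).ncard :=
          Set.ncard_le_ncard hsub (Set.toFinite _)
      _ ≤ 3 := by
          refine le_trans (Set.ncard_insert_le _ _) ?_
          have := Set.ncard_insert_le cy ({cz} : Set H.ConnectedComponent)
          simp only [Set.ncard_singleton] at this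
          omega
  · -- each component is a clique
    intro c
    rintro _ ⟨u, hu, rfl⟩ _ ⟨v, hv, rfl⟩ hne
    by_contra hadj
    rw [ConnectedComponent.mem_supp_iff] at hu hv
    rcases hall c with h | h | h
    · exact indepComp u v ⟨wy, hwyS⟩ ⟨wz, hwzS⟩ (by rw [hu, h]; exact ncxcy)
        (by rw [hu, h]; exact ncxcz) (by rw [hv, h]; exact ncxcy)
        (by rw [hv, h]; exact ncxcz) ncycz hne hadj
    · exact indepComp u v ⟨wx, hwxS⟩ ⟨wz, hwzS⟩ (by rw [hu, h]; exact ncxcy.symm)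
        (by rw [hu, h]; exact ncycz) (by rw [hv, h]; exact ncxcy.symm)
        (by rw [hv, h]; exact ncycz) ncxcz hne hadj
    · exact indepComp u v ⟨wx, hwxS⟩ ⟨wy, hwyS⟩ (by rw [hu, h]; exact ncxcz.symm)
        (by rw [hu, h]; exact ncycz.symm) (by rw [hv, h]; exact ncxcz.symm)
        (by rw [hv, h]; exact ncycz.symm) ncxcy hne hadj
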